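/- If m(α) = ∫₀^∞ x^α dF(x) < ∞, then x^α (1 − F(x)) → 0, x^α (1 − G(x)) → m(α), and x^{-α} R(x) → 2/m(α) as x → ∞. -/

import Mathlib

open MeasureTheory Real Filter Set

/-- If the α-moment `m(α) = ∫ x^α dF < ∞`, then `x^α(1-F(x)) → 0`,
`x^α(1-G(x)) → m(α)` and `x^(-α) R(x) → 2/m(α)`. -/
theorem kendall_renewal_finite_moment
    (α : ℝ) (hα : 0 < α)
    (ν : Measure ℝ) [IsProbabilityMeasure ν] (hν : ν (Set.Iic 0) = 0)
    (F H G R : ℝ → ℝ)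
    (hF : ∀ t, F t = (ν (Set.Iic t)).toReal)
    (hH : ∀ t, H t = ∫ x in Set.Ioc 0 t, x ^ α ∂ν)
    (hG : ∀ t, G t = F t - t ^ (-α) * H t)
    (hR : ∀ t, R t = G t / (1 - G t) + H t / (t ^ α * (1 - G t) ^ 2))
    (hint : IntegrableOn (fun x => x ^ α) (Set.Ioi 0) ν)
    (m : ℝ) (hm : m = ∫ x in Set.Ioi 0, x ^ α ∂ν) :
    Tendsto (fun x => x ^ α * (1 - F x)) atTop (nhds 0) ∧
    Tendsto (fun x => x ^ α * (1 - G x)) atTop (nhds m) ∧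
    Tendsto (fun x => x ^ (-α) * R x) atTop (nhds (2 / m)) := by
  -- a.e. every point is positive
  have hae : ∀ᵐ x ∂ν, x ∈ Set.Ioi 0 := by
    rw [ae_iff]
    have : {x : ℝ | ¬ x ∈ Set.Ioi 0} = Set.Iic 0 := by ext x; simp [Set.mem_Ioi, Set.mem_Iic]
    rw [this]; exact hν
  have hmeas : Measurable fun x : ℝ => x ^ α := (continuous_id.rpow_const fun _ => Or.inr hα.le).measurable
  -- integrability over the whole space
  have hIntFull : Integrable (fun x : ℝ => x ^ α) ν := by
    have := Measure.restrict_eq_self_of_ae_mem hae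
    rwa [IntegrableOn, this] at hint
  -- tail integral tends to 0
  have tail_tendsto : Tendsto (fun t => ∫ x in Set.Ioi t, x ^ α ∂ν) atTop (nhds 0) := by
    have h0 : (0 : ℝ) = ∫ x : ℝ, (0 : ℝ) ∂ν := by simp
    rw [show nhds (0 : ℝ) = nhds (∫ x : ℝ, (0 : ℝ) ∂ν) by rw [← h0]]
    have := tendsto_integral_filter_of_dominated_convergence
      (μ := ν) (l := atTop) (F := fun t => (Set.Ioi t).indicator (fun x : ℝ => x ^ α))
      (f := fun _ => (0:ℝ)) (fun x => x ^ α)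
      (Eventually.of_forall fun t =>
        (hmeas.indicator measurableSet_Ioi).aestronglyMeasurable)
      (Eventually.of_forall fun t => by
        filter_upwards [hae] with x hx
        rw [Real.norm_eq_abs]
        by_cases hxt : x ∈ Set.Ioi t
        · rw [Set.indicator_of_mem hxt, abs_of_nonneg (Real.rpow_nonneg (le_of_lt hx) α)]
        · rw [Set.indicator_of_notMem hxt]; simpa using Real.rpow_nonneg (le_of_lt hx) α)
      hIntFull
      (Eventually.of_forall fun x => by
        refine Tendsto.congr' ?_ tendsto_const_nhds
        filter_upwards [eventually_ge_atTop x] with t ht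
        simp [Set.indicator_of_notMem, not_lt.2 ht])
    refine this.congr fun t => ?_
    rw [integral_indicator measurableSet_Ioi]
  -- H tends to m
  have hH_tendsto : Tendsto H atTop (nhds m) := by
    have : Tendsto (fun t => m - ∫ x in Set.Ioi t, x ^ α ∂ν) atTop (nhds (m - 0)) :=
      tendsto_const_nhds.sub tail_tendsto
    rw [sub_zero] at this
    refine this.congr' ?_
    filter_upwards [eventually_ge_atTop (0:ℝ)] with t ht
    have hsplit : ∫ x in Set.Ioi (0:ℝ), x ^ α ∂ν
        = (∫ x in Set.Ioc 0 t, x ^ α ∂ν) + ∫ x in Set.Ioi t, x ^ α ∂ν := by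
      rw [← Set.Ioc_union_Ioi_eq_Ioi ht]
      exact setIntegral_union (Set.Ioc_disjoint_Ioi le_rfl) measurableSet_Ioi
        (hIntFull.integrableOn) (hIntFull.integrableOn)
    rw [hm, hsplit, hH]; ring
  -- relation between 1 - F and the tail measure
  have h1F : ∀ x : ℝ, 1 - F x = (ν (Set.Ioi x)).toReal := by
    intro x
    have hc : ν (Set.Iic x)ᶜ = 1 - ν (Set.Iic x) := prob_compl_eq_one_sub measurableSet_Iic
    rw [Set.compl_Iic] at hc
    rw [hF x, hc, ENNReal.toReal_sub_of_le (prob_le_one) (by simp)]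
    simp
  -- first limit
  have part1 : Tendsto (fun x => x ^ α * (1 - F x)) atTop (nhds 0) := by
    apply squeeze_zero' (g := fun x => ∫ y in Set.Ioi x, y ^ α ∂ν)
    · filter_upwards [eventually_gt_atTop (0:ℝ)] with x hx
      exact mul_nonneg (Real.rpow_nonneg hx.le α)
        (by rw [h1F]; exact ENNReal.toReal_nonneg)
    · filter_upwards [eventually_gt_atTop (0:ℝ)] with x hx
      rw [h1F]
      exact setIntegral_ge_of_const_le_real measurableSet_Ioi (measure_ne_top ν _)
        (fun y hy => Real.rpow_le_rpow hx.le (le_of_lt hy) hα.le)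
        hIntFull.integrableOn
    · exact tail_tendsto
  -- second limit
  have part2 : Tendsto (fun x => x ^ α * (1 - G x)) atTop (nhds m) := by
    have : Tendsto (fun x => x ^ α * (1 - F x) + H x) atTop (nhds (0 + m)) :=
      part1.add hH_tendsto
    rw [zero_add] at this
    refine this.congr' ?_
    filter_upwards [eventually_gt_atTop (0:ℝ)] with x hx
    have hxx : x ^ α * x ^ (-α) = 1 := by
      rw [← Real.rpow_add hx]; simp
    rw [hG]
    calc x ^ α * (1 - F x) + H x
        = x ^ α * (1 - F x) + (x ^ α * x ^ (-α)) * H x := by rw [hxx]; ring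
      _ = x ^ α * (1 - (F x - x ^ (-α) * H x)) := by ring
  -- m is positive
  have hm_pos : 0 < m := by
    rw [hm]
    have hnn : 0 ≤ᶠ[ae (ν.restrict (Set.Ioi 0))] fun x : ℝ => x ^ α := by
      filter_upwards [ae_restrict_mem measurableSet_Ioi] with x hx
      exact Real.rpow_nonneg (le_of_lt hx) α
    rw [setIntegral_pos_iff_support_of_nonneg_ae hnn hint]
    · have hsub : Set.Ioi (0:ℝ) ⊆ Function.support (fun x : ℝ => x ^ α) ∩ Set.Ioi 0 := by
        intro x hx
        exact ⟨by simp [Function.mem_support, ne_of_gt (Real.rpow_pos_of_pos hx α)], hx⟩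
      have : ν (Set.Ioi (0:ℝ)) = 1 := by
        have hc : ν (Set.Iic (0:ℝ))ᶜ = 1 - ν (Set.Iic 0) := prob_compl_eq_one_sub measurableSet_Iic
        rw [Set.compl_Iic, hν] at hc; simpa using hc
      calc (0:ENNReal) < 1 := by norm_num
        _ = ν (Set.Ioi 0) := this.symm
        _ ≤ ν _ := measure_mono hsub
  have hm_ne : m ≠ 0 := ne_of_gt hm_pos
  -- G tends to 1
  have hG_tendsto : Tendsto G atTop (nhds 1) := by
    have h1 : Tendsto (fun x => x ^ (-α) * (x ^ α * (1 - G x))) atTop (nhds (0 * m)) :=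
      (tendsto_rpow_neg_atTop hα).mul part2
    rw [zero_mul] at h1
    have h2 : Tendsto (fun x => 1 - G x) atTop (nhds 0) := by
      refine h1.congr' ?_
      filter_upwards [eventually_gt_atTop (0:ℝ)] with x hx
      have hxx : x ^ (-α) * x ^ α = 1 := by rw [← Real.rpow_add hx]; simp
      calc x ^ (-α) * (x ^ α * (1 - G x)) = (x ^ (-α) * x ^ α) * (1 - G x) := by ring
        _ = 1 - G x := by rw [hxx]; ring
    have := (tendsto_const_nhds : Tendsto (fun _ : ℝ => (1:ℝ)) atTop (nhds 1)).sub h2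
    rw [sub_zero] at this
    exact this.congr fun x => by ring
  -- third limit
  have part3 : Tendsto (fun x => x ^ (-α) * R x) atTop (nhds (2 / m)) := by
    have t1 : Tendsto (fun x => G x / (x ^ α * (1 - G x))) atTop (nhds (1 / m)) :=
      hG_tendsto.div part2 hm_ne
    have t2 : Tendsto (fun x => H x / (x ^ α * (1 - G x)) ^ 2) atTop (nhds (m / m ^ 2)) :=
      hH_tendsto.div (part2.pow 2) (pow_ne_zero 2 hm_ne)
    have hsum := t1.add t2
    have heq : 1 / m + m / m ^ 2 = 2 / m := by field_simp; ring
    rw [heq] at hsum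
    refine hsum.congr' ?_
    filter_upwards [eventually_gt_atTop (0:ℝ)] with x hx
    have hxneg : x ^ (-α) = (x ^ α)⁻¹ := Real.rpow_neg hx.le α
    have key : ∀ a b g h : ℝ, a⁻¹ * (g / b + h / (a * b ^ 2)) = g / (a * b) + h / (a * b) ^ 2 := by
      intro a b g h
      simp only [div_eq_mul_inv, mul_inv, ← inv_pow]
      ring
    rw [hR, hxneg]
    exact (key (x ^ α) (1 - G x) (G x) (H x)).symm
  exact ⟨part1, part2, part3⟩
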